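/- Let V be a finite type of values, n a natural number, and l, u : V → ℕ with l d ≤ u d for all d ∈ V. There exists an assignment a : Fin n → V satisfying gcc(l,u) if and only if ∑_{d ∈ V} l d ≤ n ≤ ∑_{d ∈ V} u d. -/

import Mathlib

open Finset

lemma exists_mid {V : Type*} [DecidableEq V] (l u : V → ℕ) (hlu : ∀ d, l d ≤ u d) :
    ∀ (s : Finset V) (n : ℕ), (∑ d ∈ s, l d) ≤ n → n ≤ ∑ d ∈ s, u d →
    ∃ c : V → ℕ, (∀ d, l d ≤ c d ∧ c d ≤ u d) ∧ ∑ d ∈ s, c d = n := by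
  intro s
  induction s using Finset.induction with
  | empty => intro n h1 h2; simp at h1 h2; exact ⟨l, fun d => ⟨le_refl _, hlu d⟩, by simp; omega⟩
  | insert _ _ hx ih =>
    rename_i a s
    intro n h1 h2
    rw [Finset.sum_insert hx] at h1 h2
    set ca := min (u a) (n - ∑ d ∈ s, l d) with hca
    have hsl : ∑ d ∈ s, l d ≤ ∑ d ∈ s, u d := Finset.sum_le_sum fun d _ => hlu d
    have hca1 : l a ≤ ca := le_min (hlu a) (by omega)
    have hca2 : ca ≤ u a := min_le_left _ _
    obtain ⟨c, hc, hsum⟩ := ih (n - ca) (by omega) (by omega)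
    refine ⟨fun d => if d = a then ca else c d, fun d => ?_, ?_⟩
    · by_cases h : d = a
      · simp only [if_pos h]; exact h ▸ ⟨hca1, hca2⟩
      · simp only [if_neg h]; exact hc d
    · rw [Finset.sum_insert hx, if_pos rfl,
        Finset.sum_congr rfl (fun d hd => if_neg (by rintro rfl; exact hx hd))]
      have : ∑ d ∈ s, c d = s.sum c := rfl
      omega

def fiberEquiv {V : Type*} (c : V → ℕ) (d : V) :
    {x : Σ d', Fin (c d') // x.1 = d} ≃ Fin (c d) where
  toFun x := x.2 ▸ x.1.2
  invFun j := ⟨⟨d, j⟩, rfl⟩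
  left_inv := by rintro ⟨⟨d', j⟩, rfl⟩; rfl
  right_inv j := rfl

theorem gcc_feasibility
    (V : Type*) [Fintype V] [DecidableEq V] (n : ℕ) (l u : V → ℕ)
    (hlu : ∀ d, l d ≤ u d) :
    (∃ a : Fin n → V,
        ∀ d, l d ≤ (univ.filter fun i => a i = d).card ∧
             (univ.filter fun i => a i = d).card ≤ u d)
    ↔ (∑ d, l d ≤ n ∧ n ≤ ∑ d, u d) := by
  constructor
  · rintro ⟨a, ha⟩
    have hn : n = ∑ d, (univ.filter fun i => a i = d).card := by
      have := Finset.card_eq_sum_card_fiberwise (f := a) (s := univ) (t := univ)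
        (fun x _ => mem_univ _)
      simpa using this
    constructor
    · rw [hn]; exact Finset.sum_le_sum fun d _ => (ha d).1
    · rw [hn]; exact Finset.sum_le_sum fun d _ => (ha d).2
  · rintro ⟨h1, h2⟩
    obtain ⟨c, hc, hsum⟩ := exists_mid l u hlu univ n h1 h2
    have hcard : Fintype.card (Σ d, Fin (c d)) = n := by
      simp [Fintype.card_sigma, hsum]
    let e : Fin n ≃ Σ d, Fin (c d) :=
      (Fintype.equivFinOfCardEq hcard).symm
    refine ⟨fun i => (e i).1, fun d => ?_⟩
    have hcount : (univ.filter fun i => (e i).1 = d).card = c d := by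
      rw [← Fintype.card_subtype]
      rw [Fintype.card_congr ((e.subtypeEquiv (fun i => Iff.rfl)).trans (fiberEquiv c d))]
      exact Fintype.card_fin _
    rw [hcount]
    exact ⟨(hc d).1, (hc d).2⟩
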